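/- Let sᵢ, tᵢ : ℝ^{i−1} → ℝ (for i = 1, …, n) be continuously differentiable and define the autoregressive map I : ℝⁿ → ℝⁿ by I(x)ᵢ = sᵢ(x₁, …, x_{i−1}) · xᵢ + tᵢ(x₁, …, x_{i−1}). Then I is differentiable, its Jacobian matrix at every x is lower triangular with diagonal entries (DI(x))_{ii} = sᵢ(x₁, …, x_{i−1}), and its Jacobian determinant equals det DI(x) = ∏_{i=1}^{n} sᵢ(x₁, …, x_{i−1}). -/

import Mathlib

open scoped BigOperators

/-- The coordinates preceding coordinate `i` of `x ∈ ℝⁿ`. -/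
def prevCoords {n : ℕ} (x : Fin n → ℝ) (i : Fin n) : Fin i → ℝ :=
  fun j => x (Fin.castLE i.isLt.le j)

/-- `prevCoords · i` as a continuous linear map. -/
noncomputable def prevCoordsCLM {n : ℕ} (i : Fin n) :
    (Fin n → ℝ) →L[ℝ] (Fin i → ℝ) :=
  ContinuousLinearMap.pi fun k => ContinuousLinearMap.proj (Fin.castLE i.isLt.le k)

lemma prevCoordsCLM_apply {n : ℕ} (i : Fin n) (x : Fin n → ℝ) :
    prevCoordsCLM i x = prevCoords x i := rfl

lemma prevCoords_single {n : ℕ} (i j : Fin n) (hij : i ≤ j) :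
    prevCoords (Pi.single j (1 : ℝ)) i = 0 := by
  funext k
  apply Pi.single_eq_of_ne
  intro h
  have : (Fin.castLE i.isLt.le k : Fin n).val = j.val := congrArg Fin.val h
  simp only [Fin.coe_castLE] at this
  have hk : (k : ℕ) < (i : ℕ) := k.isLt
  omega

/-- An autoregressive map `I(x)ᵢ = sᵢ(x₁,…,x_{i−1})·xᵢ + tᵢ(x₁,…,x_{i−1})` with `C¹`
scales and translations is differentiable, its Jacobian matrix is lower triangular
with diagonal entries `sᵢ(x₁,…,x_{i−1})`, and its Jacobian determinant is
`∏ᵢ sᵢ(x₁,…,x_{i−1})`. -/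
theorem autoregressive_jacobian
    {n : ℕ}
    (s t : (i : Fin n) → (Fin i → ℝ) → ℝ)
    (hs : ∀ i, ContDiff ℝ 1 (s i)) (ht : ∀ i, ContDiff ℝ 1 (t i))
    (I : (Fin n → ℝ) → (Fin n → ℝ))
    (hI : ∀ (x : Fin n → ℝ) (i : Fin n),
      I x i = s i (prevCoords x i) * x i + t i (prevCoords x i)) :
    ∀ x : Fin n → ℝ,
      DifferentiableAt ℝ I x ∧
      (∀ i j : Fin n, i < j → fderiv ℝ I x (Pi.single j 1) i = 0) ∧
      (∀ i : Fin n, fderiv ℝ I x (Pi.single i 1) i = s i (prevCoords x i)) ∧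
      (fderiv ℝ I x).det = ∏ i : Fin n, s i (prevCoords x i) := by
  intro x
  have hIeq : I = fun x i => s i (prevCoords x i) * x i + t i (prevCoords x i) := by
    funext x i; exact hI x i
  subst hIeq
  -- derivative of each coordinate
  set D : (i : Fin n) → ((Fin n → ℝ) →L[ℝ] ℝ) := fun i =>
    (s i (prevCoords x i) • ContinuousLinearMap.proj i +
      x i • ((fderiv ℝ (s i) (prevCoords x i)).comp (prevCoordsCLM i))) +
      (fderiv ℝ (t i) (prevCoords x i)).comp (prevCoordsCLM i) with hD
  have hcoord : ∀ i : Fin n,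
      HasFDerivAt (fun y : Fin n → ℝ => s i (prevCoords y i) * y i + t i (prevCoords y i))
        (D i) x := by
    intro i
    have hsL : HasFDerivAt (fun y : Fin n → ℝ => s i (prevCoords y i))
        ((fderiv ℝ (s i) (prevCoords x i)).comp (prevCoordsCLM i)) x := by
      have h1 : HasFDerivAt (s i) (fderiv ℝ (s i) (prevCoords x i)) (prevCoords x i) :=
        (((hs i).differentiable one_ne_zero) (prevCoords x i)).hasFDerivAt
      exact h1.comp x (prevCoordsCLM i).hasFDerivAt
    have htL : HasFDerivAt (fun y : Fin n → ℝ => t i (prevCoords y i))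
        ((fderiv ℝ (t i) (prevCoords x i)).comp (prevCoordsCLM i)) x := by
      have h1 : HasFDerivAt (t i) (fderiv ℝ (t i) (prevCoords x i)) (prevCoords x i) :=
        (((ht i).differentiable one_ne_zero) (prevCoords x i)).hasFDerivAt
      exact h1.comp x (prevCoordsCLM i).hasFDerivAt
    have hproj : HasFDerivAt (fun y : Fin n → ℝ => y i)
        (ContinuousLinearMap.proj i : (Fin n → ℝ) →L[ℝ] ℝ) x := hasFDerivAt_apply i x
    exact (hsL.mul hproj).add htL
  have hfd : HasFDerivAt (fun x : Fin n → ℝ => fun i =>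
      s i (prevCoords x i) * x i + t i (prevCoords x i))
      (ContinuousLinearMap.pi D) x := hasFDerivAt_pi.2 hcoord
  have hdiff : DifferentiableAt ℝ
      (fun x : Fin n → ℝ => fun i =>
        s i (prevCoords x i) * x i + t i (prevCoords x i)) x := hfd.differentiableAt
  have hfderiv := hfd.fderiv
  rw [hfderiv]
  -- compute D i on basis vectors
  have hDval : ∀ i j : Fin n, i ≤ j →
      D i (Pi.single j 1) = s i (prevCoords x i) * (Pi.single j 1 : Fin n → ℝ) i := by
    intro i j hij
    simp only [hD, ContinuousLinearMap.add_apply, ContinuousLinearMap.smul_apply,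
      ContinuousLinearMap.comp_apply, ContinuousLinearMap.proj_apply,
      prevCoordsCLM_apply, prevCoords_single i j hij, map_zero]
    simp [smul_eq_mul]
  have hoff : ∀ i j : Fin n, i < j →
      (ContinuousLinearMap.pi D) (Pi.single j 1) i = 0 := by
    intro i j hij
    have h0 : (Pi.single j 1 : Fin n → ℝ) i = 0 :=
      Pi.single_eq_of_ne (ne_of_lt hij) 1
    rw [ContinuousLinearMap.pi_apply, hDval i j hij.le, h0, mul_zero]
  have hdiag : ∀ i : Fin n,
      (ContinuousLinearMap.pi D) (Pi.single i 1) i = s i (prevCoords x i) := by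
    intro i
    simp only [ContinuousLinearMap.pi_apply, hDval i i le_rfl, Pi.single_eq_same, mul_one]
  refine ⟨hdiff, hoff, hdiag, ?_⟩
  -- determinant
  have hMat : LinearMap.toMatrix' ((ContinuousLinearMap.pi D) :
        (Fin n → ℝ) →ₗ[ℝ] (Fin n → ℝ)) =
      Matrix.of fun i j => (ContinuousLinearMap.pi D) (Pi.single j 1) i := by
    have hsing : ∀ j : Fin n, (fun j' => if j' = j then (1:ℝ) else 0) = Pi.single j 1 := by
      intro j; funext k; simp [Pi.single_apply]
    funext i j
    rw [Matrix.of_apply, LinearMap.toMatrix'_apply]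
    rfl
  have hdet : (ContinuousLinearMap.pi D).det =
      (Matrix.of fun i j => (ContinuousLinearMap.pi D) (Pi.single j 1) i).det := by
    rw [ContinuousLinearMap.det, ← LinearMap.det_toMatrix' , hMat]
  have hM : (Matrix.of fun i j => (ContinuousLinearMap.pi D) (Pi.single j 1) i).det
      = ∏ i : Fin n, (ContinuousLinearMap.pi D) (Pi.single i 1) i :=
    Matrix.det_of_lowerTriangular _ (fun i j hij => hoff i j hij)
  rw [hdet, hM]
  exact Finset.prod_congr rfl fun i _ => hdiag i
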